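/- Solving the ring recursion Δ_{S_j} = (λ_e + j(λ_c/k)Δ_c + λ Δ_{S_{j+1}})/(j λ_c/k + λ) for j = 1,…,k−1 with boundary value Δ_{S_k} yields Δ_{S_1} = (λ_e/λ)·Σ_{i=1}^{k−1} b_i^{(k)} + Δ_c·(1 − b_{k−1}^{(k)}) + Δ_{S_k}·b_{k−1}^{(k)}, where b_i^{(k)} = Π_{j=1}^{i} k/(k + j λ_c/λ). -/
import Mathlib


/-- Solving the clustered ring recursion backwards from `Δ_{S_k}` yields the
closed form `Δ_{S_1} = (λe/λ)·Σ_{i=1}^{k-1} b_i + Δc·(1 − b_{k-1}) + Δ_{S_k}·b_{k-1}`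
with `b_i = Π_{j=1}^{i} k/(k + jλc/λ)`. -/
theorem stmt_4 (k : ℕ) (hk : 2 ≤ k) (lamE lamC lam Δc : ℝ)
    (hE : 0 < lamE) (hC : 0 < lamC) (hl : 0 < lam)
    (Δ : ℕ → ℝ)
    (hrec : ∀ j, 1 ≤ j → j ≤ k - 1 →
      Δ j = (lamE + (j : ℝ) * (lamC / k) * Δc + lam * Δ (j + 1))
        / ((j : ℝ) * lamC / k + lam)) :
    Δ 1 = (lamE / lam) *
        (∑ i ∈ Finset.Icc 1 (k - 1), ∏ j ∈ Finset.Icc 1 i, (k : ℝ) / (k + j * lamC / lam))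
      + Δc * (1 - ∏ j ∈ Finset.Icc 1 (k - 1), (k : ℝ) / (k + j * lamC / lam))
      + Δ k * ∏ j ∈ Finset.Icc 1 (k - 1), (k : ℝ) / (k + j * lamC / lam) := by
  have hkpos : (0:ℝ) < (k:ℝ) := by
    have : 0 < k := by omega
    exact_mod_cast this
  suffices h : ∀ d m, m + d = k → 1 ≤ m →
      Δ m = (lamE / lam) *
        (∑ i ∈ Finset.Icc m (k - 1), ∏ j ∈ Finset.Icc m i, (k : ℝ) / (k + j * lamC / lam))
      + Δc * (1 - ∏ j ∈ Finset.Icc m (k - 1), (k : ℝ) / (k + j * lamC / lam))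
      + Δ k * ∏ j ∈ Finset.Icc m (k - 1), (k : ℝ) / (k + j * lamC / lam) by
    exact h (k - 1) 1 (by omega) le_rfl
  intro d
  induction d with
  | zero =>
    intro m hm _
    have hmk : m = k := by omega
    subst hmk
    have he : Finset.Icc m (m - 1) = ∅ := Finset.Icc_eq_empty (by omega)
    rw [he]
    simp
  | succ d ih =>
    intro m hm hm1
    have hmk : m ≤ k - 1 := by omega
    have key : ∀ i, m ≤ i →
        (∏ j ∈ Finset.Icc m i, (k : ℝ) / (k + j * lamC / lam))
          = ((k : ℝ) / (k + m * lamC / lam)) *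
            ∏ j ∈ Finset.Icc (m + 1) i, (k : ℝ) / (k + j * lamC / lam) := by
      intro i hi
      rw [Finset.Icc_add_one_left_eq_Ioc, ← Finset.Ioc_insert_left hi, Finset.prod_insert (by simp)]
    have hins : Finset.Icc m (k - 1) = insert m (Finset.Icc (m + 1) (k - 1)) := by
      rw [Finset.Icc_add_one_left_eq_Ioc, Finset.Ioc_insert_left hmk]
    have hsum : (∑ i ∈ Finset.Icc m (k - 1), ∏ j ∈ Finset.Icc m i, (k : ℝ) / (k + j * lamC / lam))
        = ((k : ℝ) / (k + m * lamC / lam)) *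
          (1 + ∑ i ∈ Finset.Icc (m + 1) (k - 1),
            ∏ j ∈ Finset.Icc (m + 1) i, (k : ℝ) / (k + j * lamC / lam)) := by
      rw [hins, Finset.sum_insert (by simp), Finset.Icc_self, Finset.prod_singleton,
        mul_add, mul_one, Finset.mul_sum]
      congr 1
      refine Finset.sum_congr rfl fun i hi => ?_
      have := Finset.mem_Icc.mp hi
      exact key i (by omega)
    have hprod := key (k - 1) hmk
    rw [hrec m hm1 hmk, ih (m + 1) (by omega) (by omega), hsum, hprod]
    generalize (∑ i ∈ Finset.Icc (m + 1) (k - 1),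
        ∏ j ∈ Finset.Icc (m + 1) i, (k : ℝ) / (k + j * lamC / lam)) = S
    generalize (∏ j ∈ Finset.Icc (m + 1) (k - 1), (k : ℝ) / (k + j * lamC / lam)) = Q
    have hmnn : (0:ℝ) ≤ (m:ℝ) := Nat.cast_nonneg m
    have h1 : (m : ℝ) * lamC / k + lam ≠ 0 := by positivity
    have h2 : (k : ℝ) + m * lamC / lam ≠ 0 := by positivity
    have h3 : lam ≠ 0 := ne_of_gt hl
    have h4 : (k : ℝ) ≠ 0 := ne_of_gt hkpos
    field_simp
    ring
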